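/- Let H₁, H₀ be subspaces of E and let H₁ᗮ denote the orthogonal complement of H₁. Then ϖ₁(H₁,H₁ᗮ|H₀) = 0 and ϖ₂(H₁,H₁ᗮ|H₀) = 0 if and only if the orthogonal projections commute: [Π(H₁), Π(H₀)] = 0. -/

import Mathlib

variable {E : Type*} [NormedAddCommGroup E] [InnerProductSpace ℂ E] [FiniteDimensional ℂ E]

/-- The orthogonal projection onto a subspace `K`, regarded as an operator on `E`. -/
noncomputable def proj (K : Submodule ℂ E) : E →L[ℂ] E :=
  K.subtypeL.comp (K.orthogonalProjection)

/-- The Möbius (non-additivity) operator `𝔇(H₁,H₂)`. -/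
noncomputable def MobD (H₁ H₂ : Submodule ℂ E) : E →L[ℂ] E :=
  proj (H₁ ⊔ H₂) + proj (H₁ ⊓ H₂) - proj H₁ - proj H₂


/-- The non-distributivity projector `ϖ₁(H₁,H₂|H₀)`. -/
noncomputable def varpi₁ (H₁ H₂ H₀ : Submodule ℂ E) : E →L[ℂ] E :=
  proj ((H₁ ⊔ H₀) ⊓ (H₂ ⊔ H₀)) - proj ((H₁ ⊓ H₂) ⊔ H₀)

/-- The non-distributivity projector `ϖ₂(H₁,H₂|H₀)`. -/
noncomputable def varpi₂ (H₁ H₂ H₀ : Submodule ℂ E) : E →L[ℂ] E :=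
  proj ((H₁ ⊔ H₂) ⊓ H₀) - proj ((H₁ ⊓ H₀) ⊔ (H₂ ⊓ H₀))

lemma proj_apply (K : Submodule ℂ E) (x : E) : proj K x = K.orthogonalProjection x := rfl

lemma proj_mem (K : Submodule ℂ E) (x : E) : proj K x ∈ K := (K.orthogonalProjection x).2

lemma proj_eq_self (K : Submodule ℂ E) {x : E} (hx : x ∈ K) : proj K x = x := by
  exact Submodule.starProjection_eq_self_iff.2 hx

lemma proj_eq_zero (K : Submodule ℂ E) {x : E} (hx : x ∈ Kᗮ) : proj K x = 0 := by
  exact congrArg Subtype.val (Submodule.orthogonalProjectionOnto_apply_of_mem_orthogonal hx)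

lemma proj_inj {K L : Submodule ℂ E} (h : proj K = proj L) : K = L := by
  ext x
  constructor
  · intro hx
    have := proj_eq_self K hx
    rw [h] at this
    rw [← this]; exact proj_mem L x
  · intro hx
    have := proj_eq_self L hx
    rw [← h] at this
    rw [← this]; exact proj_mem K x

lemma proj_selfAdjoint (K : Submodule ℂ E) : IsSelfAdjoint (proj K) :=
  isSelfAdjoint_starProjection K

/-- Key lemma: the decomposition `H₀ = (H₁ ⊓ H₀) ⊔ (H₁ᗮ ⊓ H₀)` is equivalent to
commutation of the projections. -/
lemma decomp_iff_commute (H₁ H₀ : Submodule ℂ E) :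
    (H₁ ⊓ H₀) ⊔ (H₁ᗮ ⊓ H₀) = H₀ ↔ proj H₁ * proj H₀ = proj H₀ * proj H₁ := by
  constructor
  · intro h
    have key : proj H₁ * proj H₀ = proj (H₁ ⊓ H₀) := by
      ext x
      obtain ⟨u, hu, v, hv, huv⟩ : ∃ u ∈ H₁ ⊓ H₀, ∃ v ∈ H₁ᗮ ⊓ H₀, (proj H₀ x : E) = u + v := by
        have : (proj H₀ x : E) ∈ (H₁ ⊓ H₀) ⊔ (H₁ᗮ ⊓ H₀) := by
          rw [h]; exact proj_mem H₀ x
        rcases Submodule.mem_sup.1 this with ⟨u, hu, v, hv, huv⟩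
        exact ⟨u, hu, v, hv, huv.symm⟩
      have h1 : (proj H₁ * proj H₀) x = u := by
        show proj H₁ (proj H₀ x) = u
        rw [huv, map_add, proj_eq_self H₁ hu.1, proj_eq_zero H₁ hv.1, add_zero]
      have h2 : proj (H₁ ⊓ H₀) x = u := by
        show (H₁ ⊓ H₀).starProjection x = u
        apply Submodule.eq_starProjection_of_mem_orthogonal hu
        have hx0 : x - proj H₀ x ∈ H₀ᗮ := Submodule.sub_starProjection_mem_orthogonal x
        have : x - u = (x - proj H₀ x) + v := by rw [huv]; abel
        rw [this]
        refine Submodule.add_mem _ ?_ ?_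
        · exact Submodule.orthogonal_le inf_le_right hx0
        · exact Submodule.orthogonal_le inf_le_left hv.1
      rw [h1, h2]
    calc proj H₁ * proj H₀ = proj (H₁ ⊓ H₀) := key
      _ = star (proj (H₁ ⊓ H₀)) := ((proj_selfAdjoint _).star_eq).symm
      _ = star (proj H₁ * proj H₀) := by rw [key]
      _ = proj H₀ * proj H₁ := by
          rw [star_mul, (proj_selfAdjoint H₀).star_eq, (proj_selfAdjoint H₁).star_eq]
  · intro h
    apply le_antisymm
    · exact sup_le inf_le_right inf_le_right
    · intro x hx
      have h1 : proj H₁ x ∈ H₁ ⊓ H₀ := by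
        refine ⟨proj_mem H₁ x, ?_⟩
        have : proj H₁ x = proj H₁ (proj H₀ x) := by rw [proj_eq_self H₀ hx]
        rw [this]
        have : proj H₁ (proj H₀ x) = proj H₀ (proj H₁ x) := ContinuousLinearMap.ext_iff.1 h x
        rw [this]
        exact proj_mem H₀ _
      have h2 : x - proj H₁ x ∈ H₁ᗮ ⊓ H₀ := by
        refine ⟨Submodule.sub_starProjection_mem_orthogonal x, Submodule.sub_mem _ hx h1.2⟩
      have : x = proj H₁ x + (x - proj H₁ x) := by abel
      rw [this]
      exact Submodule.add_mem _ (Submodule.mem_sup_left h1) (Submodule.mem_sup_right h2)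

theorem varpi_orthogonal_eq_zero_iff_commute (H₁ H₀ : Submodule ℂ E) :
    (varpi₁ H₁ H₁ᗮ H₀ = 0 ∧ varpi₂ H₁ H₁ᗮ H₀ = 0) ↔
      proj H₁ * proj H₀ - proj H₀ * proj H₁ = 0 := by
  have hsup : H₁ ⊔ H₁ᗮ = ⊤ := Submodule.sup_orthogonal_of_hasOrthogonalProjection
  have hinf : H₁ ⊓ H₁ᗮ = ⊥ := Submodule.inf_orthogonal_eq_bot H₁
  have hv2 : varpi₂ H₁ H₁ᗮ H₀ = proj H₀ - proj ((H₁ ⊓ H₀) ⊔ (H₁ᗮ ⊓ H₀)) := by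
    rw [varpi₂, hsup, top_inf_eq]
  have hv1 : varpi₁ H₁ H₁ᗮ H₀ = proj ((H₁ ⊔ H₀) ⊓ (H₁ᗮ ⊔ H₀)) - proj H₀ := by
    rw [varpi₁, hinf, bot_sup_eq]
  -- identify the varpi₁ space via orthogonal complements
  have hspace : (H₁ ⊔ H₀) ⊓ (H₁ᗮ ⊔ H₀) = ((H₁ᗮ ⊓ H₀ᗮ) ⊔ (H₁ ⊓ H₀ᗮ))ᗮ := by
    have e1 : (H₁ᗮ ⊓ H₀ᗮ)ᗮ = H₁ ⊔ H₀ := by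
      rw [Submodule.inf_orthogonal, Submodule.orthogonal_orthogonal]
    have e2 : (H₁ ⊓ H₀ᗮ)ᗮ = H₁ᗮ ⊔ H₀ := by
      conv_lhs => rw [← Submodule.orthogonal_orthogonal H₁]
      rw [Submodule.inf_orthogonal, Submodule.orthogonal_orthogonal]
    rw [← Submodule.inf_orthogonal, e1, e2]
  constructor
  · rintro ⟨-, h2⟩
    rw [hv2, sub_eq_zero] at h2
    have := (decomp_iff_commute H₁ H₀).1 (proj_inj h2).symm
    rw [this, sub_self]
  · intro h
    rw [sub_eq_zero] at h
    have hdec : (H₁ ⊓ H₀) ⊔ (H₁ᗮ ⊓ H₀) = H₀ := (decomp_iff_commute H₁ H₀).2 h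
    constructor
    · rw [hv1, sub_eq_zero, hspace]
      have hcomm' : proj H₁ * proj H₀ᗮ = proj H₀ᗮ * proj H₁ := by
        have hperp : proj H₀ᗮ = 1 - proj H₀ := by
          ext x
          exact Submodule.starProjection_orthogonal_val (K := H₀) x
        rw [hperp, mul_sub, sub_mul, mul_one, one_mul, h]
      have hdec' : (H₁ ⊓ H₀ᗮ) ⊔ (H₁ᗮ ⊓ H₀ᗮ) = H₀ᗮ := (decomp_iff_commute H₁ H₀ᗮ).2 hcomm'
      rw [sup_comm] at hdec'
      rw [hdec', Submodule.orthogonal_orthogonal]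
    · rw [hv2, sub_eq_zero, hdec]
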